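/- In the setting of the previous theorem (C cocomplete, (A, ⊗, I) small monoidal acting via ◁, J A = A ◁ J_I well-behaved for all (−) ◁ D), suppose additionally that for all D, E ∈ C the canonical map ν_J(Lan_J C((−) ◁ D, E)) ≅ C((−) ◁ D, E) is an isomorphism of presheaves on A. Then there is an adjunction isomorphism C(C ◁_J D, E) ≅ C(C, D ⊸ E), natural in C and E, where D ⊸ E = Lan_J(C((−) ◁ D, E)). -/

import Mathlib

open CategoryTheory Limits Opposite

universe v u w

namespace WellBehavedness

variable {𝒜 : Type v} [SmallCategory 𝒜] {C : Type u} [Category.{v} C]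

/-- The nerve functor `ν_J = C(J−, −) : C ⥤ PSh(𝒜)` of a functor `J : 𝒜 ⥤ C`. -/
abbrev nerve (J : 𝒜 ⥤ C) : C ⥤ (𝒜ᵒᵖ ⥤ Type v) :=
  yoneda ⋙ (Functor.whiskeringLeft _ _ _).obj J.op

/-- The unit, at `P`, of the former Mathlib adjunction `Presheaf.yonedaAdjunction L α`
(`L ⊣ restrictedYoneda J`), spelled out with its old formula. -/
def yonedaAdjunctionUnitApp {J : 𝒜 ⥤ C} (L : (𝒜ᵒᵖ ⥤ Type v) ⥤ C) (α : J ⟶ yoneda ⋙ L)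
    (P : 𝒜ᵒᵖ ⥤ Type v) : P ⟶ (nerve J).obj (L.obj P) where
  app Z := ↾fun z => α.app Z.unop ≫ L.map (yonedaEquiv.symm z)
  naturality Z Z' f := by
    ext z
    have h := α.naturality f.unop
    simp only [Functor.comp_map] at h
    dsimp
    rw [yonedaEquiv_symm_map, L.map_comp, reassoc_of% h]

/-- A functor `J : 𝒜 ⥤ C` is *dense* iff its nerve is fully faithful. -/
def IsDense (J : 𝒜 ⥤ C) : Prop :=
  (nerve J).Full ∧ (nerve J).Faithful

/-- A functor `J : 𝒜 ⥤ C` is *well-behaved for* `F : 𝒜 ⥤ C` if it is fully faithful,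
dense, and its nerve preserves the left Kan extension `Lan_J F`, i.e. the canonical
comparison exhibits `Lan_J F ⋙ ν_J` as a left Kan extension of `F ⋙ ν_J` along `J`
(so that `Lan_J(C(JA, F−))(C) ≅ C(JA, (Lan_J F)(C))` naturally in `A` and `C`). -/
def WellBehavedFor (J F : 𝒜 ⥤ C) [J.HasLeftKanExtension F] : Prop :=
  J.Full ∧ J.Faithful ∧ IsDense J ∧
    (J.leftKanExtension F ⋙ nerve J).IsLeftKanExtension
      (CategoryTheory.Functor.whiskerRight (J.leftKanExtensionUnit F) (nerve J))

open scoped MonoidalCategory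

/-- A (left) action of a monoidal category `(𝒜, ⊗, I)` on a category `C`: a functor
`◁ : 𝒜 × C ⥤ C` (curried here) together with coherent natural isomorphisms
`I ◁ X ≅ X` and `(a ⊗ b) ◁ X ≅ a ◁ (b ◁ X)`. -/
structure LeftAction (𝒜 : Type v) [SmallCategory 𝒜] [MonoidalCategory 𝒜]
    (C : Type u) [Category.{v} C] where
  act : 𝒜 ⥤ C ⥤ C
  unitIso : act.obj (𝟙_ 𝒜) ≅ 𝟭 C
  mulIso : ∀ a b : 𝒜, act.obj (a ⊗ b) ≅ act.obj b ⋙ act.obj a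
  mulIso_natural : ∀ {a a' b b' : 𝒜} (f : a ⟶ a') (g : b ⟶ b'),
    act.map (f ⊗ₘ g) ≫ (mulIso a' b').hom =
      (mulIso a b).hom ≫ CategoryTheory.Functor.whiskerRight (act.map g) (act.obj a) ≫
        CategoryTheory.Functor.whiskerLeft (act.obj b') (act.map f)
  pentagon : ∀ a b c : 𝒜,
    (mulIso (a ⊗ b) c).hom ≫ CategoryTheory.Functor.whiskerLeft (act.obj c) (mulIso a b).hom =
      act.map (α_ a b c).hom ≫ (mulIso a (b ⊗ c)).hom ≫
        CategoryTheory.Functor.whiskerRight (mulIso b c).hom (act.obj a)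
  unit_left : ∀ b : 𝒜,
    (mulIso (𝟙_ 𝒜) b).hom ≫ CategoryTheory.Functor.whiskerLeft (act.obj b) unitIso.hom ≫
      (Functor.rightUnitor (act.obj b)).hom = act.map (λ_ b).hom
  unit_right : ∀ b : 𝒜,
    (mulIso b (𝟙_ 𝒜)).hom ≫ CategoryTheory.Functor.whiskerRight unitIso.hom (act.obj b) ≫
      (Functor.leftUnitor (act.obj b)).hom = act.map (ρ_ b).hom

variable {𝒜 : Type v} [SmallCategory 𝒜] [MonoidalCategory 𝒜]
variable {C : Type u} [Category.{v} C]

/-- The functor `J : 𝒜 ⥤ C`, `J a = a ◁ J_I`. -/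
def actJ (L : LeftAction 𝒜 C) (JI : C) : 𝒜 ⥤ C where
  obj a := (L.act.obj a).obj JI
  map f := (L.act.map f).app JI
  map_id a := by simp
  map_comp f g := by simp

/-- The action on morphisms, in both variables. -/
def actMap (L : LeftAction 𝒜 C) {a a' : 𝒜} {X X' : C} (f : a ⟶ a') (g : X ⟶ X') :
    (L.act.obj a).obj X ⟶ (L.act.obj a').obj X' :=
  (L.act.map f).app X ≫ (L.act.obj a').map g

variable [HasColimits C]

/-- The `J`-extension of the action: `X ◁_J D = (Lan_J ((−) ◁ D))(X)`. -/
noncomputable def tensJ (L : LeftAction 𝒜 C) (JI : C) (X D : C) : C :=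
  (((actJ L JI).lan).obj (L.act.flip.obj D)).obj X

/-- Functoriality of `◁_J` in both variables. -/
noncomputable def tensJMap (L : LeftAction 𝒜 C) (JI : C) {X X' D D' : C}
    (f : X ⟶ X') (g : D ⟶ D') : tensJ L JI X D ⟶ tensJ L JI X' D' :=
  (((actJ L JI).lan).obj (L.act.flip.obj D)).map f ≫
    ((((actJ L JI).lan).map (L.act.flip.map g)).app X')

/-- The internal hom `D ⊸ E = Lan_J (C((−) ◁ D, E))`, where the left Kan extension of
the presheaf `C((−) ◁ D, E) : 𝒜ᵒᵖ ⥤ Type` is taken along the Yoneda embedding (i.e.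
via the Yoneda extension `Lan_𝐲 J` of `J`). -/
noncomputable def dwand (L : LeftAction 𝒜 C) (JI : C) (D E : C) : C :=
  (yoneda.leftKanExtension (actJ L JI)).obj ((L.act.flip.obj D).op ⋙ yoneda.obj E)

/-- The canonical map `C((Lan_J F)(X), E) → Nat(ν_J X, C(F−, E))` given by the
pointwise colimit formula for the left Kan extension. -/
@[simps]
noncomputable def psi (J F : 𝒜 ⥤ C) (X E : C) (φ : (J.lan.obj F).obj X ⟶ E) :
    (nerve J).obj X ⟶ F.op ⋙ yoneda.obj E where
  app a := ↾fun v => (J.lanUnit.app F).app a.unop ≫ ((J.lan.obj F).map v ≫ φ)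
  naturality a b h := by
    ext v
    dsimp
    simp only [Functor.map_comp, Category.assoc]
    have hnat := (J.lanUnit.app F).naturality h.unop
    dsimp at hnat
    rw [reassoc_of% hnat]

lemma psi_bijective (J F : 𝒜 ⥤ C) (X E : C) :
    Function.Bijective (psi J F X E) := by
  have hc : (Functor.LeftExtension.mk (J.lan.obj F)
      (J.lanUnit.app F)).IsPointwiseLeftKanExtensionAt X :=
    Functor.isPointwiseLeftKanExtensionOfIsLeftKanExtension _ (J.lanUnit.app F) X
  constructor
  · intro φ φ' h
    apply hc.hom_ext
    intro g
    have h1 := types_congr_hom (congr_app h (op g.left)) g.hom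
    dsimp [psi] at h1
    dsimp
    exact (Category.assoc _ _ _).trans (h1.trans (Category.assoc _ _ _).symm)
  · intro τ
    let c : Cocone (CostructuredArrow.proj J X ⋙ F) :=
      { pt := E
        ι :=
          { app := fun g => τ.app (op g.left) (g.hom : ((nerve J).obj X).obj (op g.left))
            naturality := fun g₁ g₂ φφ => by
              have h1 := types_congr_hom (τ.naturality φφ.left.op) g₂.hom
              dsimp at h1 ⊢
              exact h1.symm.trans ((TypeCat.congr_arg (τ.app (op g₁.left)) (CostructuredArrow.w φφ)).trans (Category.comp_id _).symm) } }
    refine ⟨hc.desc c, ?_⟩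
    ext a v
    have h2 := hc.fac c (CostructuredArrow.mk (Y := a.unop) v)
    dsimp [psi]
    dsimp at h2
    exact (Category.assoc _ _ _).symm.trans h2

/-- Naturality of `psi` in `X`. -/
lemma psi_map_left (J F : 𝒜 ⥤ C) {X X' E : C} (f : X' ⟶ X)
    (φ : (J.lan.obj F).obj X ⟶ E) :
    psi J F X' E ((J.lan.obj F).map f ≫ φ) = (nerve J).map f ≫ psi J F X E φ := by
  ext a v
  dsimp [psi]
  simp only [Functor.map_comp, Category.assoc]

/-- Naturality of `psi` in `E`. -/
lemma psi_map_right (J F : 𝒜 ⥤ C) {X E E' : C} (g : E ⟶ E')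
    (φ : (J.lan.obj F).obj X ⟶ E) :
    psi J F X E' (φ ≫ g) =
      psi J F X E φ ≫ CategoryTheory.Functor.whiskerLeft F.op (yoneda.map g) := by
  ext a v
  dsimp [psi]
  simp only [Category.assoc]

/-- **Theorem (Closedness of `◁_J`).**
In the setting of the monoidality theorem, suppose that for all `D, E ∈ C` the
canonical map `C((−) ◁ D, E) ⟶ ν_J (Lan_J (C((−) ◁ D, E)))` is an isomorphism of
presheaves on `𝒜`.  Then there is an adjunction isomorphism
`C(X ◁_J D, E) ≅ C(X, D ⊸ E)`, natural in `X` and `E`,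
where `D ⊸ E = Lan_J (C((−) ◁ D, E))`. -/
theorem tensJ_closed (L : LeftAction 𝒜 C) (JI : C)
    (hwb : ∀ D : C, WellBehavedFor (actJ L JI) (L.act.flip.obj D))
    (hnerve : ∀ D E : C,
      IsIso (yonedaAdjunctionUnitApp (yoneda.leftKanExtension (actJ L JI))
          (yoneda.leftKanExtensionUnit (actJ L JI))
        ((L.act.flip.obj D).op ⋙ yoneda.obj E))) :
    ∀ D : C, ∃ e : ∀ (X E : C), (tensJ L JI X D ⟶ E) ≃ (X ⟶ dwand L JI D E),
      (∀ {X X' E : C} (f : X' ⟶ X) (φ : tensJ L JI X D ⟶ E),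
        e X' E (tensJMap L JI f (𝟙 D) ≫ φ) = f ≫ e X E φ) ∧
      (∀ {X E E' : C} (g : E ⟶ E') (φ : tensJ L JI X D ⟶ E),
        e X E' (φ ≫ g) = e X E φ ≫
          (yoneda.leftKanExtension (actJ L JI)).map
            (CategoryTheory.Functor.whiskerLeft (L.act.flip.obj D).op (yoneda.map g))) := by
  intro D
  obtain ⟨-, -, ⟨hfull, hfaith⟩, -⟩ := hwb D
  haveI := hfull
  haveI := hfaith
  set J : 𝒜 ⥤ C := actJ L JI with hJ
  set F : 𝒜 ⥤ C := L.act.flip.obj D with hF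
  let adju := fun P => yonedaAdjunctionUnitApp (yoneda.leftKanExtension J)
    (yoneda.leftKanExtensionUnit J) P
  have adjnat : ∀ {P Q : 𝒜ᵒᵖ ⥤ Type v} (f : P ⟶ Q),
      f ≫ adju Q = adju P ≫ (nerve J).map ((yoneda.leftKanExtension J).map f) := by
    intro P Q f
    ext a z
    simp [adju, yonedaAdjunctionUnitApp]
    rw [← Functor.map_comp, yonedaEquiv_symm_naturality_right]
  let ff : (nerve J).FullyFaithful := Functor.FullyFaithful.ofFullyFaithful _
  let e : ∀ (X E : C), (tensJ L JI X D ⟶ E) ≃ (X ⟶ dwand L JI D E) := fun X E =>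
    letI := hnerve D E
    (Equiv.ofBijective _ (psi_bijective J F X E)).trans
      (((asIso (adju (F.op ⋙ yoneda.obj E))).homToEquiv).trans
        ff.homEquiv.symm)
  have he : ∀ (X E : C) (φ : tensJ L JI X D ⟶ E),
      e X E φ = ff.preimage (psi J F X E φ ≫ adju (F.op ⋙ yoneda.obj E)) := by
    intro X E φ
    rfl
  refine ⟨e, ?_, ?_⟩
  · intro X X' E f φ
    have h0 : tensJMap L JI f (𝟙 D) ≫ φ = (J.lan.obj F).map f ≫ φ := by
      simp [tensJMap, hJ, hF]
      exact congrArg (· ≫ φ) (Category.comp_id _)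
    rw [h0]
    erw [he, he]
    apply (nerve J).map_injective
    erw [Functor.map_comp]
    rw [ff.map_preimage, ff.map_preimage]
    erw [psi_map_left, Category.assoc]
  · intro X E E' g φ
    rw [he, he]
    apply (nerve J).map_injective
    erw [ff.map_preimage, Functor.map_comp, ff.map_preimage]
    have hu := adjnat (CategoryTheory.Functor.whiskerLeft F.op (yoneda.map g))
    erw [psi_map_right, Category.assoc, hu, Category.assoc]
    rfl

end WellBehavedness
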